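/- Let X and Y be finite tree languages over a ranked alphabet Σ, and let Z be the set of accessible states of the product automaton STAut_X ⊙ STAut_Y. Then SubTreeKernel(X,Y) = Σ_{z ∈ Z} ν_{X⊙Y}(z), the sum of the root weights of the accessible states of the product automaton. -/
import Mathlib


/-- Trees over a ranked alphabet `σ` with arity function `ar`:
`t = f(t₁,…,t_k)` where `k = ar f`. -/
inductive RTree (σ : Type) (ar : σ → ℕ) : Type where
  | node : (f : σ) → (Fin (ar f) → RTree σ ar) → RTree σ ar

variable {σ : Type} {ar : σ → ℕ}

/-- Number of nodes of a tree. -/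
def RTree.size : RTree σ ar → ℕ
  | .node _ ts => 1 + ∑ i, (ts i).size

/-- The set `SubTree(t)` of subtrees of a tree. -/
def RTree.subTree : RTree σ ar → Set (RTree σ ar)
  | .node f ts => insert (.node f ts) (⋃ i, (ts i).subTree)

open Classical in
/-- `SubTreeSeries_t`: the indicator of the whole tree plus the sum of the
series of its immediate subtrees. -/
noncomputable def RTree.subTreeSeries : RTree σ ar → RTree σ ar → ℕ
  | .node f ts, s => (if s = .node f ts then 1 else 0) + ∑ i, (ts i).subTreeSeries s

/-- The subtree of `t` rooted at position `p` (a node given by a list of child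
indices), if `p` is indeed a node of `t`. -/
def RTree.subtreeAt : RTree σ ar → List ℕ → Option (RTree σ ar)
  | t, [] => some t
  | .node f ts, i :: p => if h : i < ar f then (ts ⟨i, h⟩).subtreeAt p else none

/-- `SubTreeSet(L) = ⋃_{t ∈ L} SubTree(t)` for a finite tree language `L`. -/
def subTreeSet (L : Finset (RTree σ ar)) : Set (RTree σ ar) := ⋃ t ∈ L, t.subTree

/-- `SubTreeSeries_L = ∑_{t ∈ L} SubTreeSeries_t`. -/
noncomputable def subTreeSeriesL (L : Finset (RTree σ ar)) (s : RTree σ ar) : ℕ :=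
  ∑ t ∈ L, t.subTreeSeries s

/-- The SubTree kernel of two finite tree languages:
`∑_t SubTreeSeries_X(t) · SubTreeSeries_Y(t)` (finitely supported sum). -/
noncomputable def subTreeKernel (X Y : Finset (RTree σ ar)) : ℕ :=
  ∑ᶠ t, subTreeSeriesL X t * subTreeSeriesL Y t

theorem RTree.subTree_finite (t : RTree σ ar) : t.subTree.Finite := by
  induction t with
  | node f ts ih =>
    rw [RTree.subTree]
    exact (Set.finite_iUnion ih).insert _

theorem subTreeSet_finite (L : Finset (RTree σ ar)) : (subTreeSet L).Finite :=
  Set.Finite.biUnion L.finite_toSet fun t _ => t.subTree_finite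

/-- A Root-Weighted Tree Automaton with weights in `M`:
a finite state type `Q`, a root weight function `ν`, and a transition relation `δ`,
where `δ f q qs` means `(q, f, qs 1, …, qs k) ∈ δ` (with `k = ar f`). -/
structure RWTA (σ : Type) (ar : σ → ℕ) (M : Type) where
  Q : Type
  finQ : Finite Q
  ν : Q → M
  δ : (f : σ) → Q → (Fin (ar f) → Q) → Prop

variable {M : Type}

/-- The set of states reached on a tree:
`Δ(f(t₁,…,t_k)) = δ(f, Δ(t₁), …, Δ(t_k))`. -/
def RWTA.Δ (A : RWTA σ ar M) : RTree σ ar → Set A.Q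
  | .node f ts => {q | ∃ qs, A.δ f q qs ∧ ∀ i, qs i ∈ A.Δ (ts i)}

/-- The formal tree series realized by an RWTA: `P_A(t) = ∑_{q ∈ Δ(t)} ν(q)`
(equal to `0` when `Δ(t) = ∅`). -/
noncomputable def RWTA.P [AddCommMonoid M] (A : RWTA σ ar M) (t : RTree σ ar) : M :=
  ∑ᶠ q ∈ A.Δ t, A.ν q

/-- The SubTree automaton `STAut_L` of a finite tree language `L`: states are the
elements of `SubTreeSet(L)`, root weight of a state `t` is `SubTreeSeries_L(t)`, and
the transitions are `(f(t₁,…,t_k), f, t₁, …, t_k)` for states `f(t₁,…,t_k)`. -/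
noncomputable def STAut (L : Finset (RTree σ ar)) : RWTA σ ar ℕ where
  Q := ↥(subTreeSet L)
  finQ := (subTreeSet_finite L).to_subtype
  ν q := subTreeSeriesL L q.1
  δ f q qs := (q : RTree σ ar) = .node f fun i => (qs i : RTree σ ar)

/-- The product RWTA `A ⊙ B`: states `Q_A × Q_B`, componentwise transitions, and
root weights `ν((p,q)) = ν_A(p) · ν_B(q)`. -/
def RWTA.prod [Mul M] (A B : RWTA σ ar M) : RWTA σ ar M where
  Q := A.Q × B.Q
  finQ := by have := A.finQ; have := B.finQ; exact inferInstance
  ν pq := A.ν pq.1 * B.ν pq.2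
  δ f pq qs := A.δ f pq.1 (fun i => (qs i).1) ∧ B.δ f pq.2 fun i => (qs i).2

theorem RTree.self_mem_subTree (t : RTree σ ar) : t ∈ t.subTree := by
  cases t with
  | node f ts => rw [RTree.subTree]; exact Set.mem_insert _ _

theorem RTree.subTree_trans {t s : RTree σ ar} (h : s ∈ t.subTree) :
    s.subTree ⊆ t.subTree := by
  induction t with
  | node f ts ih =>
    rw [RTree.subTree] at h ⊢
    rcases h with h | h
    · subst h; rw [RTree.subTree]
    · obtain ⟨_, ⟨i, rfl⟩, hi⟩ := h
      exact (ih i hi).trans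
        ((Set.subset_iUnion (fun j => (ts j).subTree) i).trans (Set.subset_insert _ _))

theorem RTree.subTreeSeries_ne_zero_iff (t s : RTree σ ar) :
    t.subTreeSeries s ≠ 0 ↔ s ∈ t.subTree := by
  induction t with
  | node f ts ih =>
    rw [RTree.subTreeSeries, RTree.subTree]
    classical
    simp only [Set.mem_insert_iff, Set.mem_iUnion, ← ih, Nat.add_eq_zero, not_and_or,
      Finset.sum_eq_zero_iff, Finset.mem_univ, ne_eq, true_implies, not_forall]
    constructor
    · rintro (h | h)
      · left; by_contra hne; simp [hne] at h
      · right; exact h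
    · rintro (h | h)
      · left; simp [h]
      · right; exact h

theorem mem_subTreeSet_of_child {L : Finset (RTree σ ar)} {t s : RTree σ ar}
    (ht : t ∈ subTreeSet L) (hs : s ∈ t.subTree) : s ∈ subTreeSet L := by
  obtain ⟨_, ⟨u, rfl⟩, _, ⟨hu, rfl⟩, htu⟩ := ht
  exact Set.mem_biUnion hu (RTree.subTree_trans htu hs)

theorem subTreeSeriesL_ne_zero_iff (L : Finset (RTree σ ar)) (s : RTree σ ar) :
    subTreeSeriesL L s ≠ 0 ↔ s ∈ subTreeSet L := by
  rw [subTreeSeriesL, subTreeSet]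
  simp only [ne_eq, Finset.sum_eq_zero_iff, not_forall, Set.mem_iUnion]
  constructor
  · rintro ⟨t, ht, h⟩; exact ⟨t, ht, (RTree.subTreeSeries_ne_zero_iff t s).mp h⟩
  · rintro ⟨t, ht, h⟩; exact ⟨t, ht, (RTree.subTreeSeries_ne_zero_iff t s).mpr h⟩

theorem STAut_Δ (L : Finset (RTree σ ar)) (t : RTree σ ar) :
    (STAut L).Δ t = {q : ↥(subTreeSet L) | (q : RTree σ ar) = t} := by
  induction t with
  | node f ts ih =>
    ext q
    obtain ⟨qv, hqv⟩ := q
    constructor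
    · rintro ⟨qs, hq, hmem⟩
      have hq' : qv = RTree.node f fun i => (qs i).1 := hq
      show qv = RTree.node f ts
      rw [hq']
      congr 1
      funext i
      have h := hmem i
      rw [ih i] at h
      exact h
    · intro hq
      have hq : qv = .node f ts := hq
      have hmem : ∀ i, ts i ∈ subTreeSet L := by
        intro i
        refine mem_subTreeSet_of_child (hq ▸ hqv) ?_
        rw [RTree.subTree]
        exact Set.mem_insert_iff.mpr (Or.inr (Set.mem_iUnion.mpr ⟨i, (ts i).self_mem_subTree⟩))
      refine ⟨fun i => ⟨ts i, hmem i⟩, ?_, fun i => ?_⟩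
      · exact hq
      · rw [ih i]; rfl

theorem prod_Δ [Mul M] (A B : RWTA σ ar M) (t : RTree σ ar) :
    (A.prod B).Δ t = {z | z.1 ∈ A.Δ t ∧ z.2 ∈ B.Δ t} := by
  induction t with
  | node f ts ih =>
    ext z
    constructor
    · rintro ⟨qs, hδ, hmem⟩
      have hδ' : A.δ f z.1 (fun i => (qs i).1) ∧ B.δ f z.2 (fun i => (qs i).2) := hδ
      have hm : ∀ i, (qs i).1 ∈ A.Δ (ts i) ∧ (qs i).2 ∈ B.Δ (ts i) := fun i => by
        have h := hmem i; rwa [ih i] at h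
      exact ⟨⟨fun i => (qs i).1, hδ'.1, fun i => (hm i).1⟩,
             ⟨fun i => (qs i).2, hδ'.2, fun i => (hm i).2⟩⟩
    · rintro ⟨⟨qsA, hA, hmemA⟩, ⟨qsB, hB, hmemB⟩⟩
      refine ⟨fun i => (qsA i, qsB i), ?_, fun i => ?_⟩
      · exact ⟨hA, hB⟩
      · rw [ih i]; exact ⟨hmemA i, hmemB i⟩

theorem aux_kernel (X Y : Finset (RTree σ ar))
    (Z : Set (↥(subTreeSet X) × ↥(subTreeSet Y)))
    (hZ : Z = {z | (z.1 : RTree σ ar) = (z.2 : RTree σ ar)}) :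
    subTreeKernel X Y =
      ∑ᶠ z ∈ Z, subTreeSeriesL X (z.1 : RTree σ ar) * subTreeSeriesL Y (z.2 : RTree σ ar) := by
  classical
  subst hZ
  have hX : Finite ↥(subTreeSet X) := (subTreeSet_finite X).to_subtype
  have hY : Finite ↥(subTreeSet Y) := (subTreeSet_finite Y).to_subtype
  have hS : (subTreeSet X ∩ subTreeSet Y).Finite :=
    (subTreeSet_finite X).inter_of_left _
  have hZfin : {z : ↥(subTreeSet X) × ↥(subTreeSet Y) |
      (z.1 : RTree σ ar) = (z.2 : RTree σ ar)}.Finite := Set.toFinite _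
  rw [subTreeKernel,
    finsum_eq_sum_of_support_subset _ (s := hS.toFinset) (by
      intro t ht
      simp only [Function.mem_support, ne_eq, Nat.mul_eq_zero, not_or] at ht
      simp only [Set.Finite.coe_toFinset, Set.mem_inter_iff]
      exact ⟨(subTreeSeriesL_ne_zero_iff X t).mp ht.1,
        (subTreeSeriesL_ne_zero_iff Y t).mp ht.2⟩),
    finsum_mem_eq_finite_toFinset_sum _ hZfin]
  refine Finset.sum_bij
    (fun t ht => ((⟨t, (hS.mem_toFinset.mp ht).1⟩ : ↥(subTreeSet X)),
                  (⟨t, (hS.mem_toFinset.mp ht).2⟩ : ↥(subTreeSet Y)))) ?_ ?_ ?_ ?_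
  · intro t ht
    rw [hZfin.mem_toFinset]
    rfl
  · intro t1 h1 t2 h2 h
    exact congrArg (fun z : ↥(subTreeSet X) × ↥(subTreeSet Y) => (z.1 : RTree σ ar)) h
  · intro z hz
    rw [hZfin.mem_toFinset] at hz
    have hz : (z.1 : RTree σ ar) = (z.2 : RTree σ ar) := hz
    refine ⟨(z.1 : RTree σ ar), hS.mem_toFinset.mpr ⟨z.1.2, hz ▸ z.2.2⟩, ?_⟩
    exact Prod.ext (Subtype.ext rfl) (Subtype.ext hz)
  · intro t ht
    rfl

/-- `SubTreeKernel(X,Y)` equals the sum of the root weights of the accessible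
states of the product automaton `STAut_X ⊙ STAut_Y`. -/
theorem subTreeKernel_eq_sum_accessible_weights (X Y : Finset (RTree σ ar)) :
    subTreeKernel X Y =
      ∑ᶠ z ∈ {z | ∃ t, z ∈ ((STAut X).prod (STAut Y)).Δ t},
        ((STAut X).prod (STAut Y)).ν z := by
  have hZeq : {z : ↥(subTreeSet X) × ↥(subTreeSet Y) |
        ∃ t, z ∈ ((STAut X).prod (STAut Y)).Δ t}
      = {z | (z.1 : RTree σ ar) = (z.2 : RTree σ ar)} := by
    ext z
    simp only [prod_Δ, STAut_Δ, Set.mem_setOf_eq]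
    constructor
    · rintro ⟨t, h1, h2⟩
      have h1 : (z.1 : RTree σ ar) = t := h1
      have h2 : (z.2 : RTree σ ar) = t := h2
      rw [h1, h2]
    · intro h
      exact ⟨(z.2 : RTree σ ar), h, rfl⟩
  exact aux_kernel X Y _ hZeq
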